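/- Let φ : P(N) → [0,∞] be a lower semicontinuous submeasure with ‖N‖_φ = 1, where ‖A‖_φ := lim_n φ(A \ [1,n]), and let I = Exh(φ) := {A ⊆ N : ‖A‖_φ = 0}. Then there exists a normalized capacity ρ on the Borel σ-algebra of Ult(I) such that ‖A‖_φ = ρ({F ∈ Ult(I) : A ∈ F}) for every A ⊆ N. -/

import Mathlib

open Filter Set

/-- `Ult I`: the ultrafilters on `ℕ` containing the dual filter of `I`, as a
subspace of the Stone–Čech compactification `βℕ = Ultrafilter ℕ`. -/
abbrev Ult (I : Set (Set ℕ)) : Type := {F : Ultrafilter ℕ // ∀ A ∈ I, Aᶜ ∈ F}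

/-- Let `φ` be a lower semicontinuous submeasure, let
`‖A‖_φ = lim_n φ (A \ [0,n])` (the limit `L A` below, which exists by monotonicity),
with `‖ℕ‖_φ = 1`, and let `I = Exh(φ) = {A : ‖A‖_φ = 0}`. Then there is a normalized
capacity `ρ` on the Borel σ-algebra of `Ult I` with `‖A‖_φ = ρ {F ∈ Ult I : A ∈ F}`
for every `A ⊆ ℕ`. -/
theorem statement4 (φ : Set ℕ → ENNReal)
    (hempty : φ ∅ = 0)
    (hmono : ∀ A B : Set ℕ, A ⊆ B → φ A ≤ φ B)
    (hsubadd : ∀ A B : Set ℕ, φ (A ∪ B) ≤ φ A + φ B)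
    (hlsc : ∀ A : Set ℕ,
      Filter.Tendsto (fun n : ℕ => φ (A ∩ Set.Iic n)) Filter.atTop (nhds (φ A)))
    (L : Set ℕ → ENNReal)
    (hL : ∀ A : Set ℕ,
      Filter.Tendsto (fun n : ℕ => φ (A \ Set.Iic n)) Filter.atTop (nhds (L A)))
    (hLuniv : L Set.univ = 1) :
    ∃ ρ : Set (Ult {A : Set ℕ | L A = 0}) → ℝ,
      ρ ∅ = 0 ∧ ρ Set.univ = 1 ∧
      (∀ s t : Set (Ult {A : Set ℕ | L A = 0}),
        @MeasurableSet _ (borel (Ult {A : Set ℕ | L A = 0})) s →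
        @MeasurableSet _ (borel (Ult {A : Set ℕ | L A = 0})) t → s ⊆ t → ρ s ≤ ρ t) ∧
      ∀ A : Set ℕ,
        (L A).toReal = ρ {F : Ult {A : Set ℕ | L A = 0} | A ∈ (F : Ultrafilter ℕ)} := by
  set I : Set (Set ℕ) := {A : Set ℕ | L A = 0} with hI
  -- basic properties of L
  have hLmono : ∀ {A B : Set ℕ}, A ⊆ B → L A ≤ L B := by
    intro A B h
    exact le_of_tendsto_of_tendsto' (hL A) (hL B)
      (fun n => hmono _ _ (diff_subset_diff_left h))
  have hLle1 : ∀ A, L A ≤ 1 := fun A => hLuniv ▸ hLmono (subset_univ A)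
  have hLsub : ∀ A B : Set ℕ, L (A ∪ B) ≤ L A + L B := by
    intro A B
    refine le_of_tendsto_of_tendsto' (hL (A ∪ B)) ((hL A).add (hL B)) (fun n => ?_)
    calc φ ((A ∪ B) \ Set.Iic n) = φ ((A \ Set.Iic n) ∪ (B \ Set.Iic n)) := by
          rw [union_diff_distrib]
      _ ≤ _ := hsubadd _ _
  have hLempty : L ∅ = 0 := by
    have h0 : Tendsto (fun n : ℕ => φ (∅ \ Set.Iic n)) atTop (nhds 0) := by
      simpa [hempty] using (tendsto_const_nhds : Tendsto (fun _ : ℕ => (0:ENNReal)) atTop (nhds 0))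
    exact tendsto_nhds_unique (hL ∅) h0
  have hne : ∀ S : Set ℕ, L S ≠ 0 → S.Nonempty := by
    intro S h
    rcases S.eq_empty_or_nonempty with rfl | hS
    · exact absurd hLempty h
    · exact hS
  -- the dual filter of I
  let g : Filter ℕ :=
    { sets := {s : Set ℕ | L sᶜ = 0}
      univ_sets := by simp [hLempty]
      sets_of_superset := by
        intro s t hs hst
        exact le_antisymm (hs ▸ hLmono (compl_subset_compl.mpr hst)) zero_le
      inter_sets := by
        intro s t hs ht
        refine le_antisymm ?_ zero_le
        calc L (s ∩ t)ᶜ = L (sᶜ ∪ tᶜ) := by rw [compl_inter]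
          _ ≤ L sᶜ + L tᶜ := hLsub _ _
          _ = 0 := by rw [hs, ht, add_zero] }
  have hg : ∀ s : Set ℕ, s ∈ g ↔ L sᶜ = 0 := fun s => Iff.rfl
  -- key: any set of positive norm lies in some ultrafilter in Ult I
  have key : ∀ A : Set ℕ, L A ≠ 0 → ∃ F : Ult I, A ∈ (F : Ultrafilter ℕ) := by
    intro A hA
    have hnb : (g ⊓ 𝓟 A).NeBot := by
      rw [← forall_mem_nonempty_iff_neBot]
      intro s hs
      rw [mem_inf_principal] at hs
      set t : Set ℕ := {x | x ∈ A → x ∈ s} with ht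
      have htg : L tᶜ = 0 := hs
      have hsub : A ⊆ (A ∩ t) ∪ tᶜ := by
        intro x hx
        by_cases hxt : x ∈ t
        · exact Or.inl ⟨hx, hxt⟩
        · exact Or.inr hxt
      have hAt : L (A ∩ t) ≠ 0 := by
        intro h0
        apply hA
        refine le_antisymm ?_ zero_le
        calc L A ≤ L ((A ∩ t) ∪ tᶜ) := hLmono hsub
          _ ≤ L (A ∩ t) + L tᶜ := hLsub _ _
          _ = 0 := by rw [h0, htg, add_zero]
      obtain ⟨x, hxA, hxt⟩ := hne _ hAt
      exact ⟨x, hxt hxA⟩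
    obtain ⟨U, hU⟩ := Ultrafilter.exists_le (g ⊓ 𝓟 A)
    have hUA : A ∈ U := hU (inf_le_right (a := g) (mem_principal_self A))
    refine ⟨⟨U, ?_⟩, hUA⟩
    intro C hC
    exact hU (inf_le_left (b := 𝓟 A) (show L Cᶜᶜ = 0 by rwa [compl_compl]))
  -- inclusion lemma
  have incl : ∀ A B : Set ℕ,
      {F : Ult I | A ∈ (F : Ultrafilter ℕ)} ⊆ {F : Ult I | B ∈ (F : Ultrafilter ℕ)} →
      L A ≤ L B := by
    intro A B h
    have hdiff : L (A \ B) = 0 := by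
      by_contra hd
      obtain ⟨F, hF⟩ := key _ hd
      have hFA : A ∈ (F : Ultrafilter ℕ) := (F : Ultrafilter ℕ).sets_of_superset hF diff_subset
      have hFB : B ∈ (F : Ultrafilter ℕ) := h hFA
      have : (A \ B) ∩ B ∈ (F : Ultrafilter ℕ) := (F : Ultrafilter ℕ).inter_sets hF hFB
      have hemp : (A \ B) ∩ B = ∅ := by
        ext x; simp (config := { contextual := true }) [Set.mem_diff]
      rw [hemp] at this
      exact (F : Ultrafilter ℕ).toFilter.empty_notMem this
    calc L A ≤ L ((A ∩ B) ∪ (A \ B)) := hLmono (by rw [inter_union_diff])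
      _ ≤ L (A ∩ B) + L (A \ B) := hLsub _ _
      _ = L (A ∩ B) := by rw [hdiff, add_zero]
      _ ≤ L B := hLmono inter_subset_right
  -- the capacity
  set ρ : Set (Ult I) → ℝ := fun s =>
    sInf ((fun A => (L A).toReal) '' {A : Set ℕ | s ⊆ {F : Ult I | A ∈ (F : Ultrafilter ℕ)}})
    with hρ
  have hbdd : ∀ s : Set (Ult I), BddBelow
      ((fun A => (L A).toReal) '' {A : Set ℕ | s ⊆ {F : Ult I | A ∈ (F : Ultrafilter ℕ)}}) := by
    intro s
    exact ⟨0, fun x ⟨A, _, hA⟩ => hA ▸ ENNReal.toReal_nonneg⟩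
  have hnonempty : ∀ s : Set (Ult I),
      ((fun A => (L A).toReal) '' {A : Set ℕ | s ⊆ {F : Ult I | A ∈ (F : Ultrafilter ℕ)}}).Nonempty := by
    intro s
    exact ⟨(L univ).toReal, univ, fun F _ => univ_mem, rfl⟩
  have hrep : ∀ A : Set ℕ, ρ {F : Ult I | A ∈ (F : Ultrafilter ℕ)} = (L A).toReal := by
    intro A
    refine le_antisymm (csInf_le (hbdd _) ⟨A, fun F hF => hF, rfl⟩) ?_
    refine le_csInf (hnonempty _) ?_
    rintro x ⟨B, hB, rfl⟩
    have := incl A B hB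
    exact ENNReal.toReal_le_toReal (ne_top_of_le_ne_top ENNReal.one_ne_top (hLle1 A))
      (ne_top_of_le_ne_top ENNReal.one_ne_top (hLle1 B)) |>.mpr this
  refine ⟨ρ, ?_, ?_, ?_, ?_⟩
  · have hempty' : {F : Ult I | (∅ : Set ℕ) ∈ (F : Ultrafilter ℕ)} = (∅ : Set (Ult I)) := by
      ext F; simp [(F : Ultrafilter ℕ).toFilter.empty_notMem]
    calc ρ ∅ = ρ {F : Ult I | (∅ : Set ℕ) ∈ (F : Ultrafilter ℕ)} := by rw [hempty']
      _ = (L ∅).toReal := hrep ∅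
      _ = 0 := by rw [hLempty]; simp
  · have huniv' : {F : Ult I | (univ : Set ℕ) ∈ (F : Ultrafilter ℕ)} = (univ : Set (Ult I)) := by
      ext F; simp only [mem_setOf_eq, mem_univ, iff_true]; exact Filter.univ_mem
    calc ρ univ = ρ {F : Ult I | (univ : Set ℕ) ∈ (F : Ultrafilter ℕ)} := by rw [huniv']
      _ = (L univ).toReal := hrep univ
      _ = 1 := by rw [hLuniv]; simp
  · intro s t _ _ hst
    exact csInf_le_csInf (hbdd s) (hnonempty t)
      (image_mono (fun A hA => hst.trans hA))
  · intro A
    exact (hrep A).symm
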